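/- Let (η_0, ..., η_k) be a reshaping sequence, let n be a positive integer, and let (g_1, ..., g_k) be positive integers satisfying g_i ≤ ⌊n / (2·η_i − η_{i-1} + 1)⌋ + 1 for all i. Then for any i_0 with 1 ≤ i_0 ≤ k, the sum Σ_{i=i_0}^{k} η_i · g_i is at most (3n + η_{i_0}) · k. -/

import Mathlib

/-- A reshaping sequence: positive integers with `η (i-1) > η i ≥ ⌊2·η (i-1)/3⌋`. -/
def IsReshapingSeq (k : ℕ) (η : ℕ → ℕ) : Prop :=
  (∀ i ≤ k, 0 < η i) ∧ ∀ i, 1 ≤ i → i ≤ k → η i < η (i - 1) ∧ 2 * η (i - 1) / 3 ≤ η i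

theorem stmt_3 (k n : ℕ) (hn : 0 < n) (η g : ℕ → ℕ) (hη : IsReshapingSeq k η)
    (hgpos : ∀ i, 1 ≤ i → i ≤ k → 0 < g i)
    (hg : ∀ i, 1 ≤ i → i ≤ k → g i ≤ n / (2 * η i - η (i - 1) + 1) + 1)
    (i₀ : ℕ) (h1 : 1 ≤ i₀) (h2 : i₀ ≤ k) :
    ∑ i ∈ Finset.Icc i₀ k, η i * g i ≤ (3 * n + η i₀) * k := by
  obtain ⟨hpos, hstep⟩ := hη
  have hmono : ∀ i, i₀ ≤ i → i ≤ k → η i ≤ η i₀ := by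
    intro i
    induction i with
    | zero => intro h _; omega
    | succ j ih =>
      intro hij hjk
      rcases eq_or_lt_of_le hij with h | h
      · rw [← h]
      · have hj : i₀ ≤ j := by omega
        have hlt := (hstep (j + 1) (by omega) hjk).1
        simp only [Nat.add_sub_cancel] at hlt
        exact le_trans (le_of_lt hlt) (ih hj (by omega))
  have hterm : ∀ i ∈ Finset.Icc i₀ k, η i * g i ≤ 3 * n + η i₀ := by
    intro i hi
    simp only [Finset.mem_Icc] at hi
    have h1i : 1 ≤ i := le_trans h1 hi.1
    have hs := hstep i h1i hi.2
    have hpi : 0 < η i := hpos i hi.2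
    set d := 2 * η i - η (i - 1) + 1 with hd
    have hdiv : 2 * η (i - 1) ≤ 3 * η i + 2 := by
      have := (Nat.div_le_iff_le_mul_add_pred (by norm_num : (0:ℕ) < 3)).mp hs.2
      omega
    have hηd : η i ≤ 3 * d := by omega
    have hdn : d * (n / d) ≤ n := Nat.mul_div_le n d
    calc η i * g i ≤ η i * (n / d + 1) := Nat.mul_le_mul_left _ (hg i h1i hi.2)
      _ = η i * (n / d) + η i := by ring
      _ ≤ 3 * d * (n / d) + η i₀ :=
          add_le_add (Nat.mul_le_mul_right _ hηd) (hmono i hi.1 hi.2)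
      _ = 3 * (d * (n / d)) + η i₀ := by ring
      _ ≤ 3 * n + η i₀ := by omega
  calc ∑ i ∈ Finset.Icc i₀ k, η i * g i
      ≤ ∑ _i ∈ Finset.Icc i₀ k, (3 * n + η i₀) := Finset.sum_le_sum hterm
    _ = (Finset.Icc i₀ k).card * (3 * n + η i₀) := by rw [Finset.sum_const, smul_eq_mul]
    _ ≤ k * (3 * n + η i₀) := by
        rw [Nat.card_Icc]
        exact Nat.mul_le_mul_right _ (by omega)
    _ = (3 * n + η i₀) * k := Nat.mul_comm _ _
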